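/- Fix an integer N ≥ 4 and define t_k := 1 − 4·(5/2)^{N−2}·(2/5)^{k−1} + 3·5^{N−2}·(1/5)^{k−1} for k ≥ 1. Then t_{N−1} = 0 and t_N = 0, while t_k > 0 for every k with 1 ≤ k ≤ N−2 and for every k ≥ N+1. In particular the impulse response of H^N is nonnegative and its last zero occurs at index k₀ = N. -/
import Mathlib

lemma aux_cancel52 (i m : ℕ) : ((5:ℝ)/2) ^ (i + m) * ((2:ℝ)/5) ^ i = ((5:ℝ)/2) ^ m := by
  rw [pow_add, mul_comm (((5:ℝ)/2)^i) _, mul_assoc, ← mul_pow]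
  norm_num

lemma aux_cancel5 (i m : ℕ) : (5:ℝ) ^ (i + m) * ((1:ℝ)/5) ^ i = (5:ℝ) ^ m := by
  rw [pow_add, mul_comm ((5:ℝ)^i) _, mul_assoc, ← mul_pow]
  norm_num

lemma aux_cancel52' (i j : ℕ) : ((5:ℝ)/2) ^ i * ((2:ℝ)/5) ^ (i + j) = ((2:ℝ)/5) ^ j := by
  rw [pow_add, ← mul_assoc, ← mul_pow]
  norm_num

lemma aux_cancel5' (i j : ℕ) : (5:ℝ) ^ i * ((1:ℝ)/5) ^ (i + j) = ((1:ℝ)/5) ^ j := by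
  rw [pow_add, ← mul_assoc, ← mul_pow]
  norm_num

/-- Signs of the impulse response of `H^N`: for `N ≥ 4` and
`t_k = 1 − 4(5/2)^{N−2}(2/5)^{k−1} + 3·5^{N−2}(1/5)^{k−1}`, we have
`t_{N−1} = t_N = 0`, while `t_k > 0` for `1 ≤ k ≤ N−2` and for `k ≥ N+1`. -/
theorem impulse_response_HN_signs
    (N : ℕ) (hN : 4 ≤ N) (t : ℕ → ℝ)
    (ht : ∀ k : ℕ, 1 ≤ k →
      t k = 1 - 4 * (5 / 2 : ℝ) ^ (N - 2) * (2 / 5 : ℝ) ^ (k - 1)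
              + 3 * (5 : ℝ) ^ (N - 2) * (1 / 5 : ℝ) ^ (k - 1)) :
    t (N - 1) = 0 ∧ t N = 0 ∧
      (∀ k : ℕ, 1 ≤ k → k ≤ N - 2 → 0 < t k) ∧
      (∀ k : ℕ, N + 1 ≤ k → 0 < t k) := by
  obtain ⟨n, rfl⟩ : ∃ n, N = n + 4 := ⟨N - 4, by omega⟩
  have h2 : n + 4 - 2 = n + 2 := by omega
  refine ⟨?_, ?_, ?_, ?_⟩
  · have e0 : n + 4 - 1 = n + 3 := by omega
    have hk := ht (n + 3) (by omega)
    have e1 : n + 3 - 1 = n + 2 := by omega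
    rw [e0, hk, h2, e1]
    have c1 := aux_cancel52 (n + 2) 0
    have c2 := aux_cancel5 (n + 2) 0
    simp only [Nat.add_zero, pow_zero] at c1 c2
    rw [mul_assoc, c1, mul_assoc, c2]
    norm_num
  · have hk := ht (n + 4) (by omega)
    have e1 : n + 4 - 1 = (n + 2) + 1 := by omega
    rw [hk, h2, e1]
    have c1 := aux_cancel52' (n + 2) 1
    have c2 := aux_cancel5' (n + 2) 1
    rw [mul_assoc, c1, mul_assoc, c2]
    norm_num
  · intro k hk1 hk2
    obtain ⟨i, m, rfl, hm⟩ : ∃ i m, k = i + 1 ∧ 1 ≤ m ∧ i + m = n + 2 :=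
      ⟨k - 1, n + 2 - (k - 1), by omega, by omega, by omega⟩
    obtain ⟨hm1, him⟩ := hm
    have hk := ht (i + 1) (by omega)
    have e1 : i + 1 - 1 = i := by omega
    rw [hk, h2, ← him, e1, mul_assoc, aux_cancel52, mul_assoc, aux_cancel5]
    have h5 : (0:ℝ) < 5 ^ m := by positivity
    have hx : (0:ℝ) < (5/2) ^ m := by positivity
    have hz : (2:ℝ) ≤ 2 ^ m := by
      calc (2:ℝ) = 2 ^ 1 := (pow_one 2).symm
      _ ≤ 2 ^ m := pow_le_pow_right₀ (by norm_num) hm1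
    have hxz : ((5:ℝ)/2) ^ m * 2 ^ m = 5 ^ m := by
      rw [← mul_pow]; norm_num
    nlinarith [mul_le_mul_of_nonneg_left hz (le_of_lt hx)]
  · intro k hk1
    obtain ⟨j, hj2, hjk⟩ : ∃ j, 2 ≤ j ∧ k - 1 = (n + 2) + j :=
      ⟨k - n - 3, by omega, by omega⟩
    have hk := ht k (by omega)
    rw [hk, h2, hjk, mul_assoc, aux_cancel52', mul_assoc, aux_cancel5']
    have h1 : ((2:ℝ)/5) ^ j ≤ ((2:ℝ)/5) ^ 2 :=
      pow_le_pow_of_le_one (by norm_num) (by norm_num) hj2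
    have h2 : (0:ℝ) < ((1:ℝ)/5) ^ j := by positivity
    norm_num at h1
    nlinarith
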